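/- (Sign-correct three-term comparison) Assume radix 2. Let a, b, c ∈ F_ε be strictly positive with b ≥ c. Let d = fl_ε(a−b) and e = fl_ε(d−c). Then sign(e) = sign(a − b − c). -/
import Mathlib


/-- Sign-correct three-term comparison: for strictly positive radix-2 floats
`a, b, c` with `b ≥ c`, setting `d = fl(a−b)` and `e = fl(d−c)`, the sign of `e`
equals the sign of `a − b − c`. -/
theorem sign_correct_comparison (F : Set ℝ) (fl : ℝ → ℝ)
    (hmem : ∀ x, fl x ∈ F) (hfix : ∀ x ∈ F, fl x = x)
    (hmono : ∀ x y : ℝ, x ≤ y → fl x ≤ fl y)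
    (hSterbenz : ∀ a ∈ F, ∀ b ∈ F, 0 ≤ a → a / 2 ≤ b → b ≤ 2 * a → a - b ∈ F)
    (hhalf : ∀ a ∈ F, a / 2 ∈ F)
    (a b c d e : ℝ) (ha : a ∈ F) (hb : b ∈ F) (hc : c ∈ F)
    (ha0 : 0 < a) (hb0 : 0 < b) (hc0 : 0 < c) (hbc : c ≤ b)
    (hd : d = fl (a - b)) (he : e = fl (d - c)) :
    Real.sign e = Real.sign (a - b - c) := by
  have hzero : (0:ℝ) ∈ F := by
    have h := hSterbenz b hb b hb hb0.le (by linarith) (by linarith)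
    simpa using h
  have hfl0 : fl 0 = 0 := hfix 0 hzero
  have hneghalf : ∀ x ∈ F, 0 < x → -(x/2) ∈ F := by
    intro x hx hx0
    have h2 := hhalf x hx
    have h := hSterbenz (x/2) h2 x hx (by linarith) (by linarith) (by linarith)
    have hx2 : x/2 - x = -(x/2) := by ring
    rwa [hx2] at h
  -- key lemma: sign-correctness of fl (x - y) for floats x, y with y > 0
  have L : ∀ x ∈ F, ∀ y ∈ F, 0 < y → Real.sign (fl (x - y)) = Real.sign (x - y) := by
    intro x hx y hy hy0
    rcases lt_trichotomy x y with h | h | h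
    · -- x < y, so x - y < 0
      have hneg : fl (x - y) < 0 := by
        by_cases hxy : x ≤ y / 2
        · have h1 : x - y ≤ -(y/2) := by linarith
          have h2 : fl (x - y) ≤ fl (-(y/2)) := hmono _ _ h1
          rw [hfix _ (hneghalf y hy hy0)] at h2
          linarith
        · push_neg at hxy
          have hx0 : 0 < x := by linarith
          have hF : x - y ∈ F :=
            hSterbenz x hx y hy hx0.le (by linarith) (by linarith)
          rw [hfix _ hF]; linarith
      rw [Real.sign_of_neg hneg, Real.sign_of_neg (by linarith : x - y < 0)]
    · subst h
      simp [hfl0]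
    · -- x > y, so x - y > 0
      have hpos : 0 < fl (x - y) := by
        by_cases h2 : x / 2 ≤ y
        · have hF : x - y ∈ F :=
            hSterbenz x hx y hy (by linarith) h2 (by linarith)
          rw [hfix _ hF]; linarith
        · push_neg at h2
          have h1 : x/2 ≤ x - y := by linarith
          have h3 : fl (x/2) ≤ fl (x - y) := hmono _ _ h1
          rw [hfix _ (hhalf x hx)] at h3
          linarith
      rw [Real.sign_of_pos hpos, Real.sign_of_pos (by linarith : 0 < x - y)]
  have hdF : d ∈ F := by rw [hd]; exact hmem _
  by_cases hA : 2 * b < a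
  · -- a > 2b : everything positive
    have hd1 : a / 2 ≤ a - b := by linarith
    have hd2 : a / 2 ≤ d := by
      have := hmono _ _ hd1
      rw [hfix _ (hhalf a ha)] at this
      rw [hd]; linarith
    have hdc : 0 < d - c := by linarith
    rw [he, L d hdF c hc hc0, Real.sign_of_pos hdc,
      Real.sign_of_pos (by linarith : 0 < a - b - c)]
  · push_neg at hA
    by_cases hB : a < b / 2
    · -- a < b/2 : everything negative
      have hd1 : a - b ≤ -(b/2) := by linarith
      have hd2 : d ≤ -(b/2) := by
        have := hmono _ _ hd1
        rw [hfix _ (hneghalf b hb hb0)] at this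
        rw [hd]; linarith
      have hdc : d - c < 0 := by linarith
      rw [he, L d hdF c hc hc0, Real.sign_of_neg hdc,
        Real.sign_of_neg (by linarith : a - b - c < 0)]
    · -- b/2 ≤ a ≤ 2b : Sterbenz applies, d = a - b exact
      push_neg at hB
      have hF : a - b ∈ F := hSterbenz a ha b hb ha0.le (by linarith) (by linarith)
      have hd' : d = a - b := by rw [hd, hfix _ hF]
      rw [he, L d hdF c hc hc0, hd']
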